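/- If a map Φ : ℝ^{2d} × ℝ^{2d} → ℝ^{2d} × ℝ^{2d} is symplectic with respect to the extended symplectic form dp∧dq + dx∧dy, and Φ maps the diagonal submanifold N = {(p,p,q,q)} into itself, then the induced map Φ̃ : ℝ^{2d} → ℝ^{2d} defined by Φ(p,p,q,q) = (Φ̃₁(p,q), Φ̃₁(p,q), Φ̃₂(p,q), Φ̃₂(p,q)) is symplectic with respect to the standard form dp∧dq. -/

import Mathlib

open scoped BigOperators

/-- Vectors in `ℝ^d`. -/
abbrev V (d : ℕ) := Fin d → ℝ

/-- The standard symplectic form `dp ∧ dq` on `ℝ^{2d}`, coordinates `(p, q)`. -/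
def ω2 (d : ℕ) (u v : V d × V d) : ℝ :=
  ∑ i, (u.1 i * v.2 i - u.2 i * v.1 i)

/-- The extended symplectic form `dp ∧ dq + dx ∧ dy` on `ℝ^{4d}`,
coordinates ordered `(p, x, q, y)`. -/
def ω4 (d : ℕ) (u v : V d × V d × V d × V d) : ℝ :=
  ∑ i, (u.1 i * v.2.2.1 i - u.2.2.1 i * v.1 i) +
    ∑ i, (u.2.1 i * v.2.2.2 i - u.2.2.2 i * v.2.1 i)

/-- The diagonal embedding `(p,q) ↦ (p,p,q,q)` as a continuous linear map. -/
noncomputable def ιd (d : ℕ) : (V d × V d) →L[ℝ] (V d × V d × V d × V d) :=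
  (ContinuousLinearMap.fst ℝ (V d) (V d)).prod
    ((ContinuousLinearMap.fst ℝ (V d) (V d)).prod
      ((ContinuousLinearMap.snd ℝ (V d) (V d)).prod (ContinuousLinearMap.snd ℝ (V d) (V d))))

lemma ω4_ιd (d : ℕ) (a b : V d × V d) : ω4 d (ιd d a) (ιd d b) = 2 * ω2 d a b := by
  simp [ω4, ω2, ιd]
  ring

/-- If a symplectic map `Φ` of the extended phase space maps the diagonal
submanifold `N = {(p,p,q,q)}` into itself, then the induced map `Φt` on the
original phase space is symplectic. -/
theorem stmt0 (d : ℕ)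
    (Φ : V d × V d × V d × V d → V d × V d × V d × V d)
    (Φt : V d × V d → V d × V d)
    (hΦdiff : Differentiable ℝ Φ)
    (hΦsymp : ∀ z u v, ω4 d (fderiv ℝ Φ z u) (fderiv ℝ Φ z v) = ω4 d u v)
    (hΦtdiff : Differentiable ℝ Φt)
    (hdiag : ∀ p q : V d,
      Φ (p, p, q, q) = ((Φt (p, q)).1, (Φt (p, q)).1, (Φt (p, q)).2, (Φt (p, q)).2)) :
    ∀ z u v, ω2 d (fderiv ℝ Φt z u) (fderiv ℝ Φt z v) = ω2 d u v := by
  intro z u v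
  have hcomp : Φ ∘ (ιd d) = (ιd d) ∘ Φt := by
    funext w
    have := hdiag w.1 w.2
    simp [ιd, Function.comp, this]
  have h1 : fderiv ℝ (Φ ∘ ιd d) z = (fderiv ℝ Φ (ιd d z)).comp (ιd d) := by
    rw [fderiv_comp z (hΦdiff _) ((ιd d).differentiableAt)]
    simp
  have h2 : fderiv ℝ ((ιd d) ∘ Φt) z = (ιd d).comp (fderiv ℝ Φt z) := by
    rw [fderiv_comp z ((ιd d).differentiableAt) (hΦtdiff z)]
    simp
  have h3 : (fderiv ℝ Φ (ιd d z)).comp (ιd d) = (ιd d).comp (fderiv ℝ Φt z) := by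
    rw [← h1, ← h2, hcomp]
  have key : ∀ w, fderiv ℝ Φ (ιd d z) (ιd d w) = ιd d (fderiv ℝ Φt z w) :=
    fun w => congrFun (congrArg (fun (L : (V d × V d) →L[ℝ] _) => ⇑L) h3) w
  have h4 := hΦsymp (ιd d z) (ιd d u) (ιd d v)
  rw [key u, key v, ω4_ιd, ω4_ιd] at h4
  linarith
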